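/- Let N ≡ 0 (F_N ∧ z is unsatisfiable), let R be a cut of N with subcircuit N_R between R and the output such that F_{N_R} ∧ z is unsatisfiable, and let P_R be an SSA of F_{N_R} ∧ z. Let v be any fixed assignment to the variables of N not in N_R. Then the set P obtained by extending every assignment of P_R with v is an SSA of F_N ∧ z. -/

import Mathlib

open Function

abbrev Clause (V : Type*) := Finset (V × Bool)
abbrev CNF (V : Type*) := Set (Clause V)

def satLit {V : Type*} (p : V → Bool) (l : V × Bool) : Prop := p l.1 = l.2

def satClause {V : Type*} (p : V → Bool) (C : Clause V) : Prop := ∃ l ∈ C, satLit p l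

def satCNF {V : Type*} (p : V → Bool) (H : CNF V) : Prop := ∀ C ∈ H, satClause p C

def falsifies {V : Type*} (p : V → Bool) (C : Clause V) : Prop := ¬ satClause p C

/-- Hamming distance between two assignments. -/
def hdist {V : Type*} [Fintype V] [DecidableEq V] (p q : V → Bool) : ℕ :=
  (Finset.univ.filter fun v => p v ≠ q v).card

/-- The assignment obtained from `p` by flipping the value of variable `v`. -/
def flipAt {V : Type*} [DecidableEq V] (p : V → Bool) (v : V) : V → Bool :=
  Function.update p v (!p v)

/-- `Nbhd p C`: assignments at Hamming distance 1 from `p` satisfying `C`. -/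
def Nbhd {V : Type*} [Fintype V] [DecidableEq V] (p : V → Bool) (C : Clause V) :
    Set (V → Bool) :=
  {r | hdist p r = 1 ∧ satClause r C}

/-- `NbhdC q p C`: members of `Nbhd p C` strictly farther from `q` than `p` is. -/
def NbhdC {V : Type*} [Fintype V] [DecidableEq V] (q p : V → Bool) (C : Clause V) :
    Set (V → Bool) :=
  {r | hdist p r = 1 ∧ satClause r C ∧ hdist q r > hdist q p}

/-- `P` is a stable set of assignments (SSA) of `H` with center `pinit` and AC-mapping `Φ`. -/
def IsSSA {V : Type*} [Fintype V] [DecidableEq V] (H : CNF V) (P : Set (V → Bool))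
    (pinit : V → Bool) (Φ : (V → Bool) → Clause V) : Prop :=
  pinit ∈ P ∧ ∀ p ∈ P, Φ p ∈ H ∧ falsifies p (Φ p) ∧ NbhdC pinit p (Φ p) ⊆ P

/-- let the variables of `N` split as `A ⊕ B` where `A` are the variables
of the subcircuit `N_R` (between the cut `R` and the output). Suppose `F` (encoding
`F_N ∧ z`) is unsatisfiable, every clause of `FR` (encoding `F_{N_R} ∧ z`) is a clause
of `F`, and `PR` is an SSA of `FR`. Then extending every assignment of `PR` by a fixed
assignment `v` to the remaining variables yields an SSA of `F`. -/
lemma hdist_sum {A B : Type*} [Fintype A] [DecidableEq A] [Fintype B] [DecidableEq B]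
    (p q : A ⊕ B → Bool) :
    hdist p q = hdist (p ∘ Sum.inl) (q ∘ Sum.inl) + hdist (p ∘ Sum.inr) (q ∘ Sum.inr) := by
  classical
  unfold hdist
  rw [← Fintype.card_subtype, ← Fintype.card_subtype, ← Fintype.card_subtype,
    ← Fintype.card_sum]
  exact Fintype.card_congr Equiv.subtypeSum

lemma hdist_elim {A B : Type*} [Fintype A] [DecidableEq A] [Fintype B] [DecidableEq B]
    (p p' : A → Bool) (v : B → Bool) :
    hdist (Sum.elim p v) (Sum.elim p' v) = hdist p p' := by
  rw [hdist_sum]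
  have : hdist ((Sum.elim p v) ∘ Sum.inr) ((Sum.elim p' v) ∘ Sum.inr) = 0 := by
    simp [hdist]
  rw [this]
  simp [hdist]
  congr 1

theorem extend_ssa_of_subcircuit {A B : Type*} [Fintype A] [DecidableEq A]
    [Fintype B] [DecidableEq B]
    (F : CNF (A ⊕ B)) (FR : CNF A)
    (hsub : ∀ C ∈ FR, (C.image fun l => ((Sum.inl l.1 : A ⊕ B), l.2)) ∈ F)
    (hFunsat : ∀ p : A ⊕ B → Bool, ¬ satCNF p F)
    (PR : Set (A → Bool)) (pinitR : A → Bool) (ΦR : (A → Bool) → Clause A)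
    (hssa : IsSSA FR PR pinitR ΦR) (v : B → Bool) :
    ∃ Φ : (A ⊕ B → Bool) → Clause (A ⊕ B),
      IsSSA F {q : A ⊕ B → Bool | ∃ p ∈ PR, q = Sum.elim p v}
        (Sum.elim pinitR v) Φ := by
  classical
  obtain ⟨hinit, hstep⟩ := hssa
  refine ⟨fun q => (ΦR (q ∘ Sum.inl)).image fun l => ((Sum.inl l.1 : A ⊕ B), l.2), ?_, ?_⟩
  · exact ⟨pinitR, hinit, rfl⟩
  · rintro q ⟨p, hp, rfl⟩
    have hq : (Sum.elim p v) ∘ Sum.inl = p := rfl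
    simp only [hq]
    obtain ⟨hmem, hfals, hnbhd⟩ := hstep p hp
    refine ⟨hsub _ hmem, ?_, ?_⟩
    · rintro ⟨l, hl, hsat⟩
      simp only [Finset.mem_image] at hl
      obtain ⟨l', hl', rfl⟩ := hl
      exact hfals ⟨l', hl', hsat⟩
    · rintro r ⟨hd1, hsat, hfar⟩
      -- r satisfies some literal (inl a, b); q falsifies all; so the flipped coord is inl a
      obtain ⟨l, hl, hsatl⟩ := hsat
      simp only [Finset.mem_image] at hl
      obtain ⟨⟨a, b⟩, hl', rfl⟩ := hl
      -- r differs from Sum.elim p v at exactly one coordinate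
      have hne : r (Sum.inl a) ≠ (Sum.elim p v) (Sum.inl a) := by
        intro h
        exact hfals ⟨(a, b), hl', by simpa [satLit, h] using hsatl⟩
      -- so r agrees with v on B
      have hrB : ∀ b' : B, r (Sum.inr b') = v b' := by
        intro b'
        by_contra hb
        have h2 : 2 ≤ hdist (Sum.elim p v) r := by
          have : ({Sum.inl a, Sum.inr b'} : Finset (A ⊕ B)) ⊆
              Finset.univ.filter fun x => (Sum.elim p v) x ≠ r x := by
            intro x hx
            simp only [Finset.mem_insert, Finset.mem_singleton] at hx
            rcases hx with rfl | rfl <;> simp only [Finset.mem_filter, Finset.mem_univ,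
              true_and, Sum.elim_inl, Sum.elim_inr]
            · exact fun h => hne h.symm
            · exact fun h => hb h.symm
          calc 2 = ({Sum.inl a, Sum.inr b'} : Finset (A ⊕ B)).card := by simp
            _ ≤ _ := Finset.card_le_card this
        omega
      have hreq : r = Sum.elim (r ∘ Sum.inl) v := by
        funext x; cases x with
        | inl a' => rfl
        | inr b' => exact hrB b'
      refine ⟨r ∘ Sum.inl, hnbhd ⟨?_, ⟨(a, b), hl', hsatl⟩, ?_⟩, hreq⟩
      · have := hdist_elim p (r ∘ Sum.inl) v
        rw [← hreq] at this
        omega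
      · have h1 := hdist_elim pinitR (r ∘ Sum.inl) v
        rw [← hreq] at h1
        have h2 := hdist_elim pinitR p v
        omega
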